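/- arXiv:1106.2310 — 7 statements merged into one kernel-verified Lean document; each statement's English description precedes it below -/
import Mathlib

section
/- Let S be a ring with 1 and R a subring of S containing 1. Suppose x ∈ S is a unit such that x+1 is also a unit, and x⁻¹Rx = R and (x+1)⁻¹R(x+1) = R. Then either (x+1)⁻¹ ∈ R, or the set I = R ∩ (x+1)R is a proper two-sided ideal of R and x⁻¹ux - u ∈ I for all u ∈ R. -/
/-- The set `R ∩ (x+1)R` inside the ambient ring `S`. -/
def subringLemmaIdeal {S : Type*} [Ring S] (R : Subring S) (x : S) : Set S :=
  {r : S | r ∈ R ∧ ∃ s ∈ R, r = (x + 1) * s}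

/-- Subring lemma: if `x` and `x+1` are units normalizing a subring `R`, then either
`(x+1)⁻¹ ∈ R`, or `I = R ∩ (x+1)R` is a proper two-sided ideal of `R` with
`x⁻¹ u x - u ∈ I` for all `u ∈ R`. -/
theorem stmt0 {S : Type*} [Ring S] (R : Subring S) (u v : Sˣ)
    (huv : (v : S) = (u : S) + 1)
    (hconjx : (fun s : S => (↑u⁻¹ : S) * s * (u : S)) '' (R : Set S) = (R : Set S))
    (hconjx1 : (fun s : S => (↑v⁻¹ : S) * s * (v : S)) '' (R : Set S) = (R : Set S)) :
    (↑v⁻¹ : S) ∈ R ∨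
      (subringLemmaIdeal R (u : S) ≠ (R : Set S) ∧
        (0 : S) ∈ subringLemmaIdeal R (u : S) ∧
        (∀ a ∈ subringLemmaIdeal R (u : S), ∀ b ∈ subringLemmaIdeal R (u : S),
          a + b ∈ subringLemmaIdeal R (u : S)) ∧
        (∀ a ∈ subringLemmaIdeal R (u : S), -a ∈ subringLemmaIdeal R (u : S)) ∧
        (∀ r ∈ R, ∀ a ∈ subringLemmaIdeal R (u : S),
          r * a ∈ subringLemmaIdeal R (u : S) ∧ a * r ∈ subringLemmaIdeal R (u : S)) ∧
        (∀ w ∈ R, (↑u⁻¹ : S) * w * (u : S) - w ∈ subringLemmaIdeal R (u : S))) := by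
  by_cases hv : (↑v⁻¹ : S) ∈ R
  · exact Or.inl hv
  right
  -- conjugation maps R into R
  have hx : ∀ r ∈ R, (↑u⁻¹ : S) * r * (u : S) ∈ R := by
    intro r hr
    have : (↑u⁻¹ : S) * r * (u : S) ∈ ((fun s : S => (↑u⁻¹ : S) * s * (u : S)) '' (R : Set S)) :=
      Set.mem_image_of_mem _ hr
    rwa [hconjx] at this
  have hv1 : ∀ r ∈ R, (↑v⁻¹ : S) * r * (v : S) ∈ R := by
    intro r hr
    have : (↑v⁻¹ : S) * r * (v : S) ∈ ((fun s : S => (↑v⁻¹ : S) * s * (v : S)) '' (R : Set S)) :=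
      Set.mem_image_of_mem _ hr
    rwa [hconjx1] at this
  have hvv : ((u : S) + 1) = (v : S) := huv.symm
  -- commutation of inverses
  have hcommU : u * v = v * u := by
    apply Units.ext
    simp only [Units.val_mul, huv]
    noncomm_ring
  have hcomm : (↑u⁻¹ : S) * ↑v⁻¹ = (↑v⁻¹ : S) * ↑u⁻¹ := by
    have h := congrArg (fun w : Sˣ => ((w⁻¹ : Sˣ) : S)) hcommU
    simpa [mul_inv_rev] using h.symm
  -- key scalar identity : u⁻¹ - u⁻¹ v⁻¹ = v⁻¹
  have hsub : (↑u⁻¹ : S) - (↑u⁻¹ : S) * ↑v⁻¹ = (↑v⁻¹ : S) := by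
    have h1 : (1 : S) - (↑v⁻¹ : S) = (u : S) * ↑v⁻¹ := by
      have : ((v : S) - 1) * ↑v⁻¹ = (u : S) * ↑v⁻¹ := by rw [huv]; noncomm_ring
      calc (1 : S) - (↑v⁻¹ : S) = ((v : S) - 1) * ↑v⁻¹ := by
            rw [sub_mul, v.mul_inv, one_mul]
        _ = (u : S) * ↑v⁻¹ := this
    calc (↑u⁻¹ : S) - (↑u⁻¹ : S) * ↑v⁻¹ = (↑u⁻¹ : S) * ((1:S) - ↑v⁻¹) := by
          rw [mul_sub, mul_one]
      _ = (↑u⁻¹ : S) * ((u : S) * ↑v⁻¹) := by rw [h1]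
      _ = ((↑u⁻¹ : S) * (u : S)) * ↑v⁻¹ := by rw [mul_assoc]
      _ = (↑v⁻¹ : S) := by rw [u.inv_mul, one_mul]
  constructor
  · -- properness
    intro h
    have h1 : (1 : S) ∈ subringLemmaIdeal R (u : S) := by rw [h]; exact R.one_mem
    obtain ⟨-, s, hs, hs1⟩ := h1
    rw [hvv] at hs1
    have : s = (↑v⁻¹ : S) := by
      calc s = (↑v⁻¹ : S) * ((v : S) * s) := by rw [← mul_assoc, v.inv_mul, one_mul]
        _ = (↑v⁻¹ : S) := by rw [← hs1, mul_one]
    exact hv (this ▸ hs)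
  refine ⟨⟨R.zero_mem, 0, R.zero_mem, by rw [mul_zero]⟩, ?_, ?_, ?_, ?_⟩
  · rintro a ⟨haR, s, hs, rfl⟩ b ⟨hbR, t, ht, rfl⟩
    exact ⟨R.add_mem haR hbR, s + t, R.add_mem hs ht, by rw [mul_add]⟩
  · rintro a ⟨haR, s, hs, rfl⟩
    exact ⟨R.neg_mem haR, -s, R.neg_mem hs, by rw [mul_neg]⟩
  · rintro r hr a ⟨haR, s, hs, rfl⟩
    constructor
    · refine ⟨R.mul_mem hr haR, (↑v⁻¹ : S) * r * (v : S) * s, R.mul_mem (hv1 r hr) hs, ?_⟩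
      rw [hvv]
      calc r * ((v : S) * s) = ((v : S) * ↑v⁻¹) * r * ((v:S) * s) := by
            rw [v.mul_inv, one_mul]
        _ = (v : S) * ((↑v⁻¹ : S) * r * (v : S) * s) := by noncomm_ring
    · exact ⟨R.mul_mem haR hr, s * r, R.mul_mem hs hr, by rw [hvv]; noncomm_ring⟩
  · -- the key claim
    intro w hw
    set d : S := (↑u⁻¹ : S) * w * (u : S) - w with hd
    have hdR : d ∈ R := R.sub_mem (hx w hw) hw
    set e : S := (↑v⁻¹ : S) * w * (v : S) - w with he
    have heR : e ∈ R := R.sub_mem (hv1 w hw) hw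
    set f : S := (↑v⁻¹ : S) * d * (v : S) with hf
    have hfR : f ∈ R := hv1 d hdR
    set g : S := (↑u⁻¹ : S) * e * (u : S) with hg
    have hgR : g ∈ R := hx e heR
    -- main algebraic identity: u⁻¹ * e = v⁻¹ * d
    have hmain : (↑u⁻¹ : S) * e = (↑v⁻¹ : S) * d := by
      have h3 : (↑u⁻¹ : S) * ↑v⁻¹ * w - (↑u⁻¹ : S) * w = -((↑v⁻¹ : S) * w) := by
        calc (↑u⁻¹ : S) * ↑v⁻¹ * w - (↑u⁻¹ : S) * w
            = -(((↑u⁻¹ : S) - (↑u⁻¹ : S) * ↑v⁻¹) * w) := by noncomm_ring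
          _ = -((↑v⁻¹ : S) * w) := by rw [hsub]
      calc (↑u⁻¹ : S) * e
          = (↑u⁻¹ : S) * ↑v⁻¹ * w * (u : S) +
            ((↑u⁻¹ : S) * ↑v⁻¹ * w - (↑u⁻¹ : S) * w) := by
            rw [he, huv]; noncomm_ring
        _ = (↑v⁻¹ : S) * ↑u⁻¹ * w * (u : S) + (-((↑v⁻¹ : S) * w)) := by rw [h3, hcomm]
        _ = (↑v⁻¹ : S) * d := by rw [hd]; noncomm_ring
    -- c = v⁻¹ d equals f * v⁻¹ and g * u⁻¹
    have hc1 : (↑v⁻¹ : S) * d = f * ↑v⁻¹ := by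
      rw [hf]
      calc (↑v⁻¹ : S) * d = (↑v⁻¹ : S) * d * ((v : S) * ↑v⁻¹) := by
            rw [v.mul_inv, mul_one]
        _ = (↑v⁻¹ : S) * d * (v : S) * ↑v⁻¹ := by rw [← mul_assoc]
    have hc2 : (↑v⁻¹ : S) * d = g * ↑u⁻¹ := by
      rw [← hmain, hg]
      calc (↑u⁻¹ : S) * e = (↑u⁻¹ : S) * e * ((u : S) * ↑u⁻¹) := by
            rw [u.mul_inv, mul_one]
        _ = (↑u⁻¹ : S) * e * (u : S) * ↑u⁻¹ := by rw [← mul_assoc]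
    -- hence c = f - g ∈ R
    have hfg : f = g + (↑v⁻¹ : S) * d := by
      calc f = (f * ↑v⁻¹) * (v : S) := by rw [mul_assoc, v.inv_mul, mul_one]
        _ = (g * ↑u⁻¹) * ((u : S) + 1) := by rw [← hc1, hc2, huv]
        _ = g * ((↑u⁻¹ : S) * (u : S)) + g * ↑u⁻¹ := by noncomm_ring
        _ = g + g * ↑u⁻¹ := by rw [u.inv_mul, mul_one]
        _ = g + (↑v⁻¹ : S) * d := by rw [← hc2]
    have hcR : (↑v⁻¹ : S) * d ∈ R := by
      have : (↑v⁻¹ : S) * d = f - g := by rw [hfg]; noncomm_ring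
      rw [this]; exact R.sub_mem hfR hgR
    refine ⟨hdR, (↑v⁻¹ : S) * d, hcR, ?_⟩
    rw [hvv]
    calc d = ((v : S) * ↑v⁻¹) * d := by rw [v.mul_inv, one_mul]
      _ = (v : S) * ((↑v⁻¹ : S) * d) := by rw [mul_assoc]
end

section
/- Let S be a unital ring and R a subring of S with 1 ∈ R, and suppose x ∈ S is a unit such that x+1 is a unit, x⁻¹Rx = R and (x+1)⁻¹R(x+1) = R. If additionally R is a division ring and x+1 does not have its inverse in R, then x centralizes R, i.e. xu = ux for all u ∈ R. -/
/-- Special case of the subring lemma: if `R` is a division subring of `S`, `x` and `x+1`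
are units of `S` normalizing `R`, and `(x+1)⁻¹ ∉ R`, then `x` centralizes `R`. -/
theorem stmt1 {S : Type*} [Ring S] (R : Subring S) (u v : Sˣ)
    (huv : (v : S) = (u : S) + 1)
    (hconjx : (fun s : S => (↑u⁻¹ : S) * s * (u : S)) '' (R : Set S) = (R : Set S))
    (hconjx1 : (fun s : S => (↑v⁻¹ : S) * s * (v : S)) '' (R : Set S) = (R : Set S))
    (hdiv : ∀ r ∈ R, r ≠ 0 → ∃ s ∈ R, r * s = 1 ∧ s * r = 1)
    (hnot : (↑v⁻¹ : S) ∉ R) :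
    ∀ r ∈ R, (u : S) * r = r * (u : S) := by
  intro r hr
  set a : S := (↑u⁻¹ : S) * r * u with ha_def
  set b : S := (↑v⁻¹ : S) * r * v with hb_def
  have ha : a ∈ R := by
    rw [← SetLike.mem_coe, ← hconjx]; exact ⟨r, hr, rfl⟩
  have hb : b ∈ R := by
    rw [← SetLike.mem_coe, ← hconjx1]; exact ⟨r, hr, rfl⟩
  have hua : (u : S) * a = r * u := by
    rw [ha_def, ← mul_assoc, ← mul_assoc, Units.mul_inv, one_mul]
  have hvb : (v : S) * b = r * v := by
    rw [hb_def, ← mul_assoc, ← mul_assoc, Units.mul_inv, one_mul]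
  have hvb' : (u : S) * b + b = r * u + r := by
    have h1 : ((u : S) + 1) * b = r * ((u : S) + 1) := by rw [← huv]; exact hvb
    rw [add_mul, one_mul, mul_add, mul_one] at h1
    exact h1
  -- key: u * (a - b) = b - r
  have key : (u : S) * (a - b) = b - r := by
    have hub : (u : S) * b = r * u + r - b := eq_sub_of_add_eq hvb'
    rw [mul_sub, hua, hub]
    abel
  by_cases hab : a = b
  · -- then b = r, and u commutes with r
    have hub : (u : S) * b = r * u := by rw [← hab]; exact hua
    have hbr : b = r := by
      have := hvb'
      rw [hub] at this
      exact add_left_cancel this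
    rw [← hua, hab, hbr]
  · -- a - b nonzero in R, so u ∈ R, then v ∈ R, contradiction
    have hmem : a - b ∈ R := R.sub_mem ha hb
    have hne : a - b ≠ 0 := sub_ne_zero.mpr hab
    obtain ⟨s, hs, hs1, hs2⟩ := hdiv _ hmem hne
    have huR : (u : S) ∈ R := by
      have : (u : S) = (b - r) * s := by
        calc (u : S) = (u : S) * ((a - b) * s) := by rw [hs1, mul_one]
        _ = ((u : S) * (a - b)) * s := (mul_assoc _ _ _).symm
        _ = (b - r) * s := by rw [key]
      rw [this]; exact R.mul_mem (R.sub_mem hb hr) hs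
    have hvR : (v : S) ∈ R := by rw [huv]; exact R.add_mem huR R.one_mem
    have hvne : (v : S) ≠ 0 := by
      intro h
      have h1 : (1 : S) = 0 := by rw [← v.inv_mul, h, mul_zero]
      have h2 : (↑v⁻¹ : S) = 0 := by
        calc (↑v⁻¹ : S) = ↑v⁻¹ * 1 := (mul_one _).symm
        _ = ↑v⁻¹ * 0 := by rw [h1]
        _ = 0 := mul_zero _
      exact hnot (h2 ▸ R.zero_mem)
    obtain ⟨t, ht, ht1, ht2⟩ := hdiv _ hvR hvne
    have htv : t = (↑v⁻¹ : S) := by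
      calc t = 1 * t := (one_mul t).symm
      _ = (↑v⁻¹ * v) * t := by rw [v.inv_mul]
      _ = ↑v⁻¹ * (v * t) := mul_assoc _ _ _
      _ = ↑v⁻¹ := by rw [ht1, mul_one]
    exact absurd (htv ▸ ht) hnot
end

section
/- In the setting of the pseudo-quadratic form π(r,x,s) = s*r + π̄(x) + K₀ on V = K ⊕ V̄ ⊕ K, for v ∈ V̄ and t ∈ K with π̄(v) − t ∈ K₀, define α_{(v,t)} ∈ End(V) by (r,x,s)α_{(v,t)} = (r − f(v,x) + t*s, x + vs, s). Then α_{(v,t)} is an invertible K-linear map preserving π (i.e. π((r,x,s)α_{(v,t)}) = π(r,x,s) for all (r,x,s)), and α_{(v,t)}α_{(w,u)} = α_{(v+w, t+u+f(v,w))}. -/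
open MulOpposite

private lemma f_zero_left {K W : Type*} [DivisionRing K] [AddCommGroup W]
    (f : W → W → K) (hf_addl : ∀ x y z : W, f (x + y) z = f x z + f y z) (z : W) :
    f 0 z = 0 := by
  have h := hf_addl 0 0 z
  rw [add_zero] at h
  exact (right_eq_add.mp h)

private lemma f_zero_right {K W : Type*} [DivisionRing K] [AddCommGroup W]
    (f : W → W → K) (hf_addr : ∀ x y z : W, f x (y + z) = f x y + f x z) (z : W) :
    f z 0 = 0 := by
  have h := hf_addr z 0 0
  rw [add_zero] at h
  exact (right_eq_add.mp h)

private lemma f_neg_left {K W : Type*} [DivisionRing K] [AddCommGroup W]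
    (f : W → W → K) (hf_addl : ∀ x y z : W, f (x + y) z = f x z + f y z) (y z : W) :
    f (-y) z = - f y z := by
  have h := hf_addl y (-y) z
  rw [add_neg_cancel, f_zero_left f hf_addl] at h
  exact eq_neg_of_add_eq_zero_right h.symm

private lemma f_neg_right {K W : Type*} [DivisionRing K] [AddCommGroup W]
    (f : W → W → K) (hf_addr : ∀ x y z : W, f x (y + z) = f x y + f x z) (y z : W) :
    f z (-y) = - f z y := by
  have h := hf_addr z y (-y)
  rw [add_neg_cancel, f_zero_right f hf_addr] at h
  exact eq_neg_of_add_eq_zero_right h.symm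

private lemma trace_mem {K : Type*} [DivisionRing K] [StarRing K]
    (K0 : AddSubgroup K) (h1 : (1 : K) ∈ K0)
    (hamp : ∀ x : K, ∀ a ∈ K0, star x * a * x ∈ K0) (x : K) :
    x + star x ∈ K0 := by
  have hq : ∀ y : K, star y * y ∈ K0 := fun y => by simpa using hamp y 1 h1
  have h2 := K0.sub_mem (K0.sub_mem (hq (x + 1)) (hq x)) h1
  have h3 : star (x + 1) * (x + 1) - star x * x - 1 = x + star x := by
    simp [star_add, add_mul, mul_add]
    abel
  rwa [h3] at h2

private lemma comp_lemma {K : Type*} [DivisionRing K] [StarRing K]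
    {W : Type*} [AddCommGroup W] [Module Kᵐᵒᵖ W]
    (f : W → W → K)
    (hf_addl : ∀ x y z : W, f (x + y) z = f x z + f y z)
    (hf_addr : ∀ x y z : W, f x (y + z) = f x y + f x z)
    (hf_sr : ∀ (lam : K) (x y : W), f x (op lam • y) = f x y * lam)
    (hf_skew : ∀ x y : W, star (f x y) = - f y x)
    (α : W → K → (K × W × K) → (K × W × K))
    (hα : α = fun v t p => (p.1 - f v p.2.1 + star t * p.2.2, p.2.1 + op p.2.2 • v, p.2.2))
    (v : W) (t : K) (w : W) (u : K) (p : K × W × K) :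
    α w u (α v t p) = α (v + w) (t + u + f v w) p := by
  obtain ⟨r, x, s⟩ := p
  have hsk : star (f v w) = - f w v := hf_skew v w
  simp only [hα, smul_add, hf_addl, hf_addr, hf_sr, star_add, hsk]
  refine Prod.ext ?_ (Prod.ext ?_ rfl)
  · simp only []
    noncomm_ring
  · simp only []
    abel

private lemma id_lemma {K : Type*} [DivisionRing K] [StarRing K]
    {W : Type*} [AddCommGroup W] [Module Kᵐᵒᵖ W]
    (f : W → W → K)
    (hf_addl : ∀ x y z : W, f (x + y) z = f x z + f y z)
    (α : W → K → (K × W × K) → (K × W × K))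
    (hα : α = fun v t p => (p.1 - f v p.2.1 + star t * p.2.2, p.2.1 + op p.2.2 • v, p.2.2))
    (p : K × W × K) : α 0 0 p = p := by
  obtain ⟨r, x, s⟩ := p
  simp [hα, f_zero_left f hf_addl]

/-- In the setting of the pseudo-quadratic form `π(r,x,s) = s* r + ρ(x) + K₀` on
`V = K ⊕ W ⊕ K`, for `v ∈ W` and `t ∈ K` with `ρ(v) − t ∈ K₀` the map
`α_{(v,t)} : (r,x,s) ↦ (r − f(v,x) + t* s, x + vs, s)` is an invertible `K`-linear
(right-linear) map preserving `π` modulo `K₀`, and `α_{(v,t)} α_{(w,u)} = α_{(v+w, t+u+f(v,w))}`. -/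
theorem stmt9 {K : Type*} [DivisionRing K] [StarRing K]
    (K0 : AddSubgroup K) (h1 : (1 : K) ∈ K0) (hsym : ∀ a ∈ K0, star a = a)
    (hamp : ∀ x : K, ∀ a ∈ K0, star x * a * x ∈ K0)
    {W : Type*} [AddCommGroup W] [Module Kᵐᵒᵖ W]
    (ρ : W → K) (f : W → W → K)
    (hf_addl : ∀ x y z : W, f (x + y) z = f x z + f y z)
    (hf_addr : ∀ x y z : W, f x (y + z) = f x y + f x z)
    (hf_sl : ∀ (lam : K) (x y : W), f (op lam • x) y = star lam * f x y)
    (hf_sr : ∀ (lam : K) (x y : W), f x (op lam • y) = f x y * lam)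
    (hf_skew : ∀ x y : W, star (f x y) = - f y x)
    (hρ_sc : ∀ (lam : K) (x : W), ρ (op lam • x) - star lam * ρ x * lam ∈ K0)
    (hρ_add : ∀ x y : W, ρ (x + y) - ρ x - ρ y - f x y ∈ K0)
    (haniso : ∀ x : W, ρ x ∈ K0 → x = 0)
    (π : K × W × K → K) (hπ : π = fun p => star p.2.2 * p.1 + ρ p.2.1)
    (α : W → K → (K × W × K) → (K × W × K))
    (hα : α = fun v t p => (p.1 - f v p.2.1 + star t * p.2.2, p.2.1 + op p.2.2 • v, p.2.2))
    (v : W) (t : K) (hvt : ρ v - t ∈ K0)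
    (w : W) (u : K) (hwu : ρ w - u ∈ K0) :
    (∀ p q : K × W × K, α v t (p + q) = α v t p + α v t q) ∧
    (∀ (lam : K) (p : K × W × K), α v t (op lam • p) = op lam • α v t p) ∧
    Function.Bijective (α v t) ∧
    (∀ p : K × W × K, π (α v t p) - π p ∈ K0) ∧
    (∀ p : K × W × K, α w u (α v t p) = α (v + w) (t + u + f v w) p) := by
  refine ⟨?_, ?_, ?_, ?_, fun p => comp_lemma f hf_addl hf_addr hf_sr hf_skew α hα v t w u p⟩
  · rintro ⟨r, x, s⟩ ⟨r', x', s'⟩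
    simp only [hα, Prod.mk_add_mk, hf_addr, op_add, add_smul, mul_add]
    refine Prod.ext ?_ (Prod.ext ?_ rfl)
    · simp only []; abel
    · simp only []; abel
  · rintro lam ⟨r, x, s⟩
    simp only [hα, Prod.smul_mk, op_smul_eq_mul, hf_sr, op_mul, mul_smul, smul_add, mul_assoc]
    rw [sub_mul]
  · have hL : ∀ p, α (-v) (f v v - t) (α v t p) = p := by
      intro p
      rw [comp_lemma f hf_addl hf_addr hf_sr hf_skew α hα,
        add_neg_cancel, f_neg_right f hf_addr]
      have : t + (f v v - t) + -f v v = 0 := by abel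
      rw [this, id_lemma f hf_addl α hα]
    have hR : ∀ p, α v t (α (-v) (f v v - t) p) = p := by
      intro p
      rw [comp_lemma f hf_addl hf_addr hf_sr hf_skew α hα,
        neg_add_cancel, f_neg_left f hf_addl]
      have : f v v - t + t + -f v v = 0 := by abel
      rw [this, id_lemma f hf_addl α hα]
    exact ⟨Function.LeftInverse.injective hL, Function.RightInverse.surjective hR⟩
  · rintro ⟨r, x, s⟩
    have key : π (α v t (r, x, s)) - π (r, x, s) =
        (ρ (x + op s • v) - ρ x - ρ (op s • v) - f x (op s • v))
        + (ρ (op s • v) - star s * ρ v * s)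
        + (-(star s * f v x + star (star s * f v x)))
        + star s * ((ρ v - t) + (t + star t)) * s := by
      simp only [hπ, hα, hf_sr, star_mul, star_star, hf_skew]
      noncomm_ring
    rw [key]
    exact K0.add_mem (K0.add_mem (K0.add_mem (hρ_add x (op s • v)) (hρ_sc s v))
      (K0.neg_mem (trace_mem K0 h1 hamp _)))
      (hamp s _ (K0.add_mem hvt (trace_mem K0 h1 hamp t)))
end

section
/- Let A be a group acting on an abelian group V with [V,A,A,A] = 0, and set A₀ = C_A([V,A]) ∩ C_A(V/C_V(A)). Then the commutator subgroup A' is contained in A₀, and A₀ is contained in the center Z(A) provided A acts faithfully on V. -/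
variable {A V : Type*} [Group A] [AddCommGroup V] [DistribMulAction A V]

/-- The subgroup `[V,A]` generated by all commutators `a • v − v`. -/
def commSubgroup (A V : Type*) [Group A] [AddCommGroup V] [DistribMulAction A V] :
    AddSubgroup V :=
  AddSubgroup.closure {x : V | ∃ (a : A) (v : V), x = a • v - v}

/-- The fixed points `C_V(A)`. -/
def fixedSet (A V : Type*) [Group A] [AddCommGroup V] [DistribMulAction A V] : Set V :=
  {v : V | ∀ a : A, a • v = v}

/-- `A₀ = C_A([V,A]) ∩ C_A(V/C_V(A))`. -/
def A0set (A V : Type*) [Group A] [AddCommGroup V] [DistribMulAction A V] : Set A :=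
  {a : A | (∀ w ∈ commSubgroup A V, a • w = w) ∧ ∀ v : V, a • v - v ∈ fixedSet A V}

private lemma cubic_on_comm
    (hcubic : ∀ (a b c : A) (v : V),
      a • (b • (c • v - v) - (c • v - v)) - (b • (c • v - v) - (c • v - v)) = 0)
    (a b : A) {w : V} (hw : w ∈ commSubgroup A V) :
    a • (b • w - w) - (b • w - w) = 0 := by
  induction hw using AddSubgroup.closure_induction with
  | mem x hx =>
    obtain ⟨c, v, rfl⟩ := hx
    exact hcubic a b c v
  | zero => simp
  | add x y hx hy px py =>
    have : a • (b • (x + y) - (x + y)) - (b • (x + y) - (x + y)) =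
        (a • (b • x - x) - (b • x - x)) + (a • (b • y - y) - (b • y - y)) := by
      simp only [smul_add, smul_sub]; abel
    rw [this, px, py, add_zero]
  | neg x hx px =>
    have : a • (b • (-x) - (-x)) - (b • (-x) - (-x)) =
        -(a • (b • x - x) - (b • x - x)) := by
      simp only [smul_neg, smul_sub]; abel
    rw [this, px, neg_zero]

private lemma comm_smul_mem (a : A) {w : V} (hw : w ∈ commSubgroup A V) :
    a • w ∈ commSubgroup A V := by
  induction hw using AddSubgroup.closure_induction with
  | mem x hx =>
    obtain ⟨c, v, rfl⟩ := hx
    refine AddSubgroup.subset_closure ⟨a * c * a⁻¹, a • v, ?_⟩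
    rw [smul_sub, ← mul_smul, ← mul_smul]
    simp [mul_assoc]
  | zero => simpa using (commSubgroup A V).zero_mem
  | add x y _ _ px py => rw [smul_add]; exact (commSubgroup A V).add_mem px py
  | neg x _ px => rw [smul_neg]; exact (commSubgroup A V).neg_mem px

/-- the key identity: `a•(b•v) - b•(a•v) = [v,b,a] - [v,a,b]`. -/
private lemma swap_identity (a b : A) (v : V) :
    a • (b • v) - b • (a • v) =
      (a • (b • v - v) - (b • v - v)) - (b • (a • v - v) - (a • v - v)) := by
  simp only [smul_sub]; abel

private lemma comm_on_comm
    (hcubic : ∀ (a b c : A) (v : V),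
      a • (b • (c • v - v) - (c • v - v)) - (b • (c • v - v) - (c • v - v)) = 0)
    (a b : A) {w : V} (hw : w ∈ commSubgroup A V) :
    a • (b • w) = b • (a • w) := by
  have h1 := cubic_on_comm hcubic a b hw
  have h2 := cubic_on_comm hcubic b a hw
  have := swap_identity a b w
  rw [h1, h2, sub_zero] at this
  exact sub_eq_zero.mp this

open scoped commutatorElement

/-- If `A` acts cubically on `V`, then `A' ⊆ A₀ := C_A([V,A]) ∩ C_A(V/C_V(A))`, and `A₀` is
contained in the center of `A` provided `A` acts faithfully on `V`. -/
theorem stmt12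
    (hcubic : ∀ (a b c : A) (v : V),
      a • (b • (c • v - v) - (c • v - v)) - (b • (c • v - v) - (c • v - v)) = 0) :
    (∀ a b : A, ⁅a, b⁆ ∈ A0set A V) ∧
      ((∀ a : A, (∀ v : V, a • v = v) → a = 1) →
        ∀ a ∈ A0set A V, ∀ b : A, a * b = b * a) := by
  constructor
  · intro a b
    constructor
    · -- ⁅a,b⁆ fixes [V,A] pointwise
      intro w hw
      have h2 : a⁻¹ • (b⁻¹ • w) = b⁻¹ • (a⁻¹ • w) := comm_on_comm hcubic a⁻¹ b⁻¹ hw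
      show (a * b * a⁻¹ * b⁻¹) • w = w
      rw [mul_smul, mul_smul, mul_smul, h2]
      rw [← mul_smul b b⁻¹, mul_inv_cancel, one_smul, ← mul_smul, mul_inv_cancel, one_smul]
    · -- ⁅a,b⁆ • v - v ∈ C_V(A)
      intro v c
      set p := a⁻¹ • (b⁻¹ • v) with hp
      have hbap : b • (a • p) = v := by
        rw [hp, smul_inv_smul, smul_inv_smul]
      have hkey : ⁅a, b⁆ • v - v =
          (a • (b • p - p) - (b • p - p)) - (b • (a • p - p) - (a • p - p)) := by
        rw [← swap_identity a b p, hbap]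
        have : ⁅a, b⁆ • v = a • (b • p) := by
          rw [commutatorElement_def, hp, mul_smul, mul_smul, mul_smul]
        rw [this]
      have hX := hcubic c a b p
      have hY := hcubic c b a p
      rw [hkey, smul_sub, sub_eq_zero.mp hX, sub_eq_zero.mp hY]
  · intro hfaith a ha b
    obtain ⟨h1, h2⟩ := ha
    have key : ∀ v : V, ((b * a)⁻¹ * (a * b)) • v = v := by
      intro v
      have hb : b • v - v ∈ commSubgroup A V := AddSubgroup.subset_closure ⟨b, v, rfl⟩
      have e1 : a • (b • v - v) = b • v - v := h1 _ hb
      have e2 : b • (a • v - v) = a • v - v := h2 v b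
      have e3 : (a * b) • v = (b * a) • v := by
        rw [mul_smul, mul_smul]
        have : a • (b • v) - b • (a • v) = 0 := by
          rw [swap_identity, e1, e2]; abel
        linear_combination (norm := abel) this
      rw [mul_smul, e3, ← mul_smul, inv_mul_cancel, one_smul]
    have := hfaith _ key
    rw [inv_mul_eq_one] at this
    exact this.symm
end

section
/- Let K be a division ring with involution * of characteristic 2 and let J be an ample hermitian subgroup of (K,*) such that J generates K as a ring. Define N_K(J) = {r ∈ K : r* J r ⊆ J}. If J ⊆ N_K(J) and r*r ∈ J, r + r* ∈ J for all r ∈ K, then N_K(J) is a subring of K containing J, and consequently N_K(J) = K, i.e. J is ample in K. -/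
/-- Let `K` be a division ring of characteristic 2 with involution `*` and `J` an ample
hermitian subgroup generating `K` as a ring. With `N = {r : r* J r ⊆ J}`, if `J ⊆ N` and
`r* r ∈ J`, `r + r* ∈ J` for all `r`, then `N` is a subring of `K` containing `J`, and
consequently `N = K`. -/
theorem stmt16 {K : Type*} [DivisionRing K] [StarRing K] (hchar : (2 : K) = 0)
    (J : AddSubgroup K) (h1 : (1 : K) ∈ J) (hsym : ∀ a ∈ J, star a = a)
    (hgen : Subring.closure (J : Set K) = ⊤)
    (N : Set K) (hN : N = {r : K | ∀ j ∈ J, star r * j * r ∈ J})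
    (hJN : (J : Set K) ⊆ N)
    (hsq : ∀ r : K, star r * r ∈ J)
    (htr : ∀ r : K, r + star r ∈ J) :
    (1 : K) ∈ N ∧ (∀ r ∈ N, ∀ s ∈ N, r * s ∈ N ∧ r + s ∈ N) ∧ (J : Set K) ⊆ N ∧
      N = Set.univ := by
  subst hN
  have hone : (1 : K) ∈ {r : K | ∀ j ∈ J, star r * j * r ∈ J} := by
    intro j hj; simpa using hj
  have hmul : ∀ r ∈ {r : K | ∀ j ∈ J, star r * j * r ∈ J},
      ∀ s ∈ {r : K | ∀ j ∈ J, star r * j * r ∈ J},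
      r * s ∈ {r : K | ∀ j ∈ J, star r * j * r ∈ J} := by
    intro r hr s hs j hj
    have : star (r * s) * j * (r * s) = star s * (star r * j * r) * s := by
      simp only [star_mul]; noncomm_ring
    rw [this]
    exact hs _ (hr j hj)
  have hadd : ∀ r ∈ {r : K | ∀ j ∈ J, star r * j * r ∈ J},
      ∀ s ∈ {r : K | ∀ j ∈ J, star r * j * r ∈ J},
      r + s ∈ {r : K | ∀ j ∈ J, star r * j * r ∈ J} := by
    intro r hr s hs j hj
    have hexp : star (r + s) * j * (r + s) =
        star r * j * r + star s * j * s + (star r * j * s + star s * j * r) := by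
      simp only [star_add]; noncomm_ring
    rw [hexp]
    have hcross : star r * j * s + star s * j * r ∈ J := by
      have : star s * j * r = star (star r * j * s) := by
        simp [star_mul, mul_assoc, hsym j hj]
      rw [this]
      exact htr _
    exact J.add_mem (J.add_mem (hr j hj) (hs j hj)) hcross
  refine ⟨hone, fun r hr s hs => ⟨hmul r hr s hs, hadd r hr s hs⟩, hJN, ?_⟩
  have hneg : ∀ x : K, -x = x := by
    intro x
    have h : x + x = 0 := by rw [← two_mul, hchar, zero_mul]
    exact neg_eq_of_add_eq_zero_left h
  let S : Subring K :=
    { carrier := {r : K | ∀ j ∈ J, star r * j * r ∈ J}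
      one_mem' := hone
      mul_mem' := fun {a b} ha hb => hmul a ha b hb
      add_mem' := fun {a b} ha hb => hadd a ha b hb
      zero_mem' := by intro j hj; simpa using J.zero_mem
      neg_mem' := fun {a} ha => by rw [hneg a]; exact ha }
  have : Subring.closure (J : Set K) ≤ S := Subring.closure_le.mpr hJN
  rw [hgen] at this
  ext x
  simp only [Set.mem_univ, iff_true]
  exact this (Subring.mem_top x)
end

section
/- Let K be a division ring with involution *, and suppose x, y ∈ K satisfy: y⁻¹ c x = (y⁻¹ c x)* for all c in a subset J ⊆ {c : c* = c} with 1 ∈ J which generates K as a ring. Then yx* is a symmetric element commuting with every element of J, hence yx* lies in {z ∈ Z(K) : z* = z}. -/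
/-- Let `K` be a division ring with involution `*`, and `J` a set of symmetric elements with
`1 ∈ J` generating `K` as a ring. If `x, y ∈ K` with `y ≠ 0` satisfy
`(y⁻¹ c x)* = y⁻¹ c x` for all `c ∈ J`, then `y x*` is symmetric, commutes with every
element of `J`, and hence lies in `{z ∈ Z(K) : z* = z}`. -/
theorem stmt17 {K : Type*} [DivisionRing K] [StarRing K]
    (J : Set K) (hJ : ∀ c ∈ J, star c = c) (h1 : (1 : K) ∈ J)
    (hgen : Subring.closure J = ⊤)
    (x y : K) (hy : y ≠ 0)
    (hsymm : ∀ c ∈ J, star (y⁻¹ * c * x) = y⁻¹ * c * x) :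
    star (y * star x) = y * star x ∧
      (∀ c ∈ J, (y * star x) * c = c * (y * star x)) ∧
      (∀ k : K, (y * star x) * k = k * (y * star x)) := by
  have hsy : (star y : K) ≠ 0 := fun h => hy (by simpa using congrArg star h)
  -- key identity: y * x* * c = c * x * y*  for c ∈ J
  have key : ∀ c ∈ J, y * star x * c = c * x * star y := by
    intro c hc
    have h := hsymm c hc
    have h' : star x * c * (star y)⁻¹ = y⁻¹ * c * x := by
      rw [← h]
      simp [mul_assoc, hJ c hc, star_inv₀]
    have e1 : star x * c * (star y)⁻¹ * star y = star x * c := inv_mul_cancel_right₀ hsy _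
    calc y * star x * c = y * (star x * c * (star y)⁻¹ * star y) := by rw [e1, mul_assoc]
      _ = y * (y⁻¹ * c * x * star y) := by rw [h']
      _ = c * x * star y := by
          simp only [← mul_assoc]
          rw [mul_inv_cancel₀ hy, one_mul]
  have hc1 := key 1 h1
  simp at hc1
  have hstar : star (y * star x) = y * star x := by
    rw [star_mul, star_star, hc1]
  have hcomm : ∀ c ∈ J, (y * star x) * c = c * (y * star x) := by
    intro c hc
    rw [key c hc, hc1, mul_assoc]
  refine ⟨hstar, hcomm, ?_⟩
  have hsub : Subring.closure J ≤ Subring.centralizer {y * star x} := by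
    rw [Subring.closure_le]
    intro c hc
    simp only [Subring.coe_centralizer, Set.mem_centralizer_iff, Set.mem_singleton_iff]
    rintro m rfl
    exact hcomm c hc
  intro k
  have : k ∈ Subring.centralizer {y * star x} := hsub (by rw [hgen]; trivial)
  exact Subring.mem_centralizer_iff.mp this _ rfl
end

section
/- Let K be a division ring with involution *, J = {x : x* = x} ample (containing all traces), V = K ⊕ W ⊕ K for a right K-vector space W with anisotropic pseudo-quadratic form ρ : W → K/J and skew-hermitian form f. Define on V = {[r,w,s]} the scalar action [r,w,s]∘λ = [rλ, wλ, sλ], and π([r,w,s]) = s*r + ρ(w) + J. Then for the map b acting by [r,w,s]b = [r − f(b₀,w) + t*s, w + b₀s, s] (with ρ(b₀) = t + J), π is b-invariant: π([r,w,s]b) = π([r,w,s]). -/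
open MulOpposite

/-- Let `K` be a division ring with involution, `J` an ample additive subgroup of symmetric
elements containing all traces, `W` a right `K`-vector space with anisotropic
pseudo-quadratic form `ρ : W → K/J` (represented by a lift `ρ : W → K`) and skew-hermitian
form `f`. On `V = K ⊕ W ⊕ K` set `π([r,w,s]) = s* r + ρ(w) + J`. Then for `b₀ ∈ W`, `t ∈ K`
with `ρ(b₀) − t ∈ J`, the map `β : [r,w,s] ↦ [r − f(b₀,w) + t* s, w + b₀ s, s]` preserves
`π` modulo `J`. -/
theorem stmt19 {K : Type*} [DivisionRing K] [StarRing K]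
    (J : AddSubgroup K) (h1 : (1 : K) ∈ J) (hsym : ∀ a ∈ J, star a = a)
    (hamp : ∀ x : K, ∀ a ∈ J, star x * a * x ∈ J)
    (htr : ∀ r : K, r + star r ∈ J)
    {W : Type*} [AddCommGroup W] [Module Kᵐᵒᵖ W]
    (ρ : W → K) (f : W → W → K)
    (hf_addl : ∀ x y z : W, f (x + y) z = f x z + f y z)
    (hf_addr : ∀ x y z : W, f x (y + z) = f x y + f x z)
    (hf_sl : ∀ (lam : K) (x y : W), f (op lam • x) y = star lam * f x y)
    (hf_sr : ∀ (lam : K) (x y : W), f x (op lam • y) = f x y * lam)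
    (hf_skew : ∀ x y : W, star (f x y) = - f y x)
    (hρ_sc : ∀ (lam : K) (x : W), ρ (op lam • x) - star lam * ρ x * lam ∈ J)
    (hρ_add : ∀ x y : W, ρ (x + y) - ρ x - ρ y - f x y ∈ J)
    (haniso : ∀ x : W, ρ x ∈ J → x = 0)
    (π : K × W × K → K) (hπ : π = fun p => star p.2.2 * p.1 + ρ p.2.1)
    (b0 : W) (t : K) (hb0 : ρ b0 - t ∈ J)
    (β : (K × W × K) → (K × W × K))
    (hβ : β = fun p => (p.1 - f b0 p.2.1 + star t * p.2.2, p.2.1 + op p.2.2 • b0, p.2.2)) :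
    ∀ p : K × W × K, π (β p) - π p ∈ J := by
  intro p
  obtain ⟨r, w, s⟩ := p
  subst hπ hβ
  simp only
  have hA := hρ_add w (op s • b0)
  have hB := hρ_sc s b0
  have hC := htr (f w b0 * s)
  have hD := hamp s ((t + star t) + (ρ b0 - t)) (J.add_mem (htr t) hb0)
  have key : star s * (r - f b0 w + star t * s) + ρ (w + op s • b0) -
      (star s * r + ρ w)
      = (ρ (w + op s • b0) - ρ w - ρ (op s • b0) - f w (op s • b0))
        + (ρ (op s • b0) - star s * ρ b0 * s)
        + (f w b0 * s + star (f w b0 * s))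
        + (star s * ((t + star t) + (ρ b0 - t)) * s) := by
    rw [hf_sr, star_mul, hf_skew]
    noncomm_ring
  rw [key]
  exact J.add_mem (J.add_mem (J.add_mem hA hB) hC) hD
end
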